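/- In ℓ₂ ⊗̂_π ℓ₂, the sequence (eₙ ⊗ eₙ), where (eₙ) is the canonical orthonormal basis of ℓ₂, is isometrically equivalent to the canonical basis of ℓ₁; in particular it has no weakly convergent subsequence, even though (eₙ) is weakly null in ℓ₂. -/

import Mathlib

open Filter Topology NormedSpace

noncomputable section

namespace NormedSpace

/-- The old `NormedSpace.Dual` (removed from Mathlib): the topological dual `E →L[𝕜] 𝕜`
with the operator norm. -/
def Dual (𝕜 : Type*) [NontriviallyNormedField 𝕜] (E : Type*) [SeminormedAddCommGroup E]
    [NormedSpace 𝕜 E] : Type _ :=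
  E →L[𝕜] 𝕜

section DualInstances

variable (𝕜 : Type*) [NontriviallyNormedField 𝕜] (E : Type*) [SeminormedAddCommGroup E]
  [NormedSpace 𝕜 E]

instance : SeminormedAddCommGroup (Dual 𝕜 E) := ContinuousLinearMap.toSeminormedAddCommGroup

instance : NormedSpace 𝕜 (Dual 𝕜 E) := ContinuousLinearMap.toNormedSpace

instance : FunLike (Dual 𝕜 E) E 𝕜 := ContinuousLinearMap.funLike

instance : ContinuousLinearMapClass (Dual 𝕜 E) 𝕜 E 𝕜 := ContinuousLinearMap.continuousSemilinearMapClass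

end DualInstances

end NormedSpace

variable (X Y : Type*) [NormedAddCommGroup X] [NormedSpace ℝ X] [CompleteSpace X]
  [NormedAddCommGroup Y] [NormedSpace ℝ Y] [CompleteSpace Y]

/-- The space `B(X × Y)` of bounded bilinear forms on `X × Y`. -/
abbrev Bil := X →L[ℝ] Y →L[ℝ] ℝ

/-- The elementary tensor `x ⊗ y`, viewed as a functional on bounded bilinear
forms: `⟨x ⊗ y, B⟩ = B x y`. -/
def elemTensor (x : X) (y : Y) : Dual ℝ (Bil X Y) :=
  (ContinuousLinearMap.apply ℝ ℝ y).comp (ContinuousLinearMap.apply ℝ (Y →L[ℝ] ℝ) x)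

/-- The projective tensor product `X ⊗̂_π Y`: the closed linear span of the elementary
tensors inside `B(X × Y)*` (the induced dual norm is the projective norm, and the weak
topology of `X ⊗̂_π Y` is the topology `σ(X ⊗̂_π Y, B(X × Y))` inherited from the
weak-* topology of `B(X × Y)*`). -/
def ptp : Submodule ℝ (Dual ℝ (Bil X Y)) :=
  (Submodule.span ℝ {u | ∃ x y, u = elemTensor X Y x y}).topologicalClosure

/-- The approximation property: for every `ε > 0` and every compact set `K` there is
a finite-rank operator `T` with `‖T x - x‖ ≤ ε` on `K`. -/
def HasAP (Z : Type*) [NormedAddCommGroup Z] [NormedSpace ℝ Z] : Prop :=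
  ∀ ε : ℝ, 0 < ε → ∀ K : Set Z, IsCompact K →
    ∃ T : Z →L[ℝ] Z, FiniteDimensional ℝ (LinearMap.range (T : Z →ₗ[ℝ] Z)) ∧
      ∀ x ∈ K, ‖T x - x‖ ≤ ε

local notation "ℓ₂" => lp (fun _ : ℕ => ℝ) 2

open scoped ENNReal

namespace DiagAux

lemma mem_z (ε : ℕ → ℝ) (hε : ∀ n, |ε n| ≤ 1) (y : ℓ₂) :
    Memℓp (fun n => ε n * y n) 2 := by
  apply memℓp_gen
  have hy := (lp.memℓp y).summable (by norm_num : 0 < (2:ℝ≥0∞).toReal)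
  refine hy.of_nonneg_of_le (fun n => by positivity) (fun n => ?_)
  apply Real.rpow_le_rpow (norm_nonneg _) _ (by norm_num)
  rw [Real.norm_eq_abs, Real.norm_eq_abs, abs_mul]
  calc |ε n| * |y n| ≤ 1 * |y n| := by
        exact mul_le_mul_of_nonneg_right (hε n) (abs_nonneg _)
    _ = |y n| := one_mul _

def Zl (ε : ℕ → ℝ) (hε : ∀ n, |ε n| ≤ 1) : ℓ₂ →ₗ[ℝ] ℓ₂ where
  toFun y := ⟨fun n => ε n * y n, mem_z ε hε y⟩
  map_add' y z := by ext n; simp [mul_add]; rfl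
  map_smul' c y := by ext n; simp [lp.coeFn_smul]; ring

lemma Zl_norm (ε : ℕ → ℝ) (hε : ∀ n, |ε n| ≤ 1) (y : ℓ₂) : ‖Zl ε hε y‖ ≤ 1 * ‖y‖ := by
  rw [one_mul]
  apply lp.norm_le_of_forall_sum_le (by norm_num : 0 < (2:ℝ≥0∞).toReal) (norm_nonneg y)
  intro s
  refine le_trans ?_ (lp.sum_rpow_le_norm_rpow (by norm_num) y s)
  apply Finset.sum_le_sum
  intro i _
  apply Real.rpow_le_rpow (norm_nonneg _) _ (by norm_num)
  show ‖ε i * y i‖ ≤ ‖y i‖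
  rw [Real.norm_eq_abs, Real.norm_eq_abs, abs_mul]
  calc |ε i| * |y i| ≤ 1 * |y i| :=
        mul_le_mul_of_nonneg_right (hε i) (abs_nonneg _)
    _ = |y i| := one_mul _

def Z (ε : ℕ → ℝ) (hε : ∀ n, |ε n| ≤ 1) : ℓ₂ →L[ℝ] ℓ₂ :=
  (Zl ε hε).mkContinuous 1 (Zl_norm ε hε)

def Bd (ε : ℕ → ℝ) (hε : ∀ n, |ε n| ≤ 1) : ℓ₂ →L[ℝ] ℓ₂ →L[ℝ] ℝ :=
  (((innerSL ℝ (E := ℓ₂)).flip.comp (Z ε hε)).flip)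

lemma Bd_apply (ε : ℕ → ℝ) (hε : ∀ n, |ε n| ≤ 1) (x y : ℓ₂) :
    Bd ε hε x y = (inner ℝ x (Z ε hε y) : ℝ) := rfl

lemma Bd_single (ε : ℕ → ℝ) (hε : ∀ n, |ε n| ≤ 1) (k : ℕ) :
    Bd ε hε (lp.single 2 k (1:ℝ)) (lp.single 2 k (1:ℝ)) = ε k := by
  rw [Bd_apply, lp.inner_single_left]
  show inner ℝ (1:ℝ) (ε k * (lp.single 2 k (1:ℝ) : ∀ _, ℝ) k) = ε k
  rw [lp.single_apply_self]
  simp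

lemma Bd_norm (ε : ℕ → ℝ) (hε : ∀ n, |ε n| ≤ 1) : ‖Bd ε hε‖ ≤ 1 := by
  apply ContinuousLinearMap.opNorm_le_bound _ zero_le_one
  intro x
  apply ContinuousLinearMap.opNorm_le_bound _ (by positivity)
  intro y
  rw [Bd_apply]
  calc ‖(inner ℝ x (Z ε hε y) : ℝ)‖ ≤ ‖x‖ * ‖Z ε hε y‖ := norm_inner_le_norm _ _
    _ ≤ ‖x‖ * ‖y‖ := by
        have := (Zl_norm ε hε y); rw [one_mul] at this
        exact mul_le_mul_of_nonneg_left this (norm_nonneg _)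
    _ = 1 * ‖x‖ * ‖y‖ := by ring

end DiagAux


set_option maxHeartbeats 2000000 in
/-- in `ℓ₂ ⊗̂_π ℓ₂` the sequence `(eₙ ⊗ eₙ)` is isometrically equivalent
to the canonical basis of `ℓ₁` (`‖Σ aₙ eₙ ⊗ eₙ‖_π = Σ |aₙ|` for finitely supported
scalars); in particular it has no weakly convergent subsequence, although `(eₙ)` is
weakly null in `ℓ₂`. -/
theorem diagonal_tensor_basis_isometric_l1 (e : ℕ → ℓ₂)
    (he : ∀ n, e n = lp.single 2 n (1 : ℝ)) :
    (∀ a : ℕ →₀ ℝ,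
      ‖(∑ n ∈ a.support, a n • elemTensor ℓ₂ ℓ₂ (e n) (e n) : Dual ℝ (Bil ℓ₂ ℓ₂))‖
        = ∑ n ∈ a.support, |a n|) ∧
    (¬ ∃ φ : ℕ → ℕ, StrictMono φ ∧ ∃ u : Dual ℝ (Bil ℓ₂ ℓ₂), u ∈ ptp ℓ₂ ℓ₂ ∧
      ∀ B : Bil ℓ₂ ℓ₂,
        Tendsto (fun k => elemTensor ℓ₂ ℓ₂ (e (φ k)) (e (φ k)) B) atTop (𝓝 (u B))) ∧
    (∀ f : ℓ₂ →L[ℝ] ℝ, Tendsto (fun n => f (e n)) atTop (𝓝 0)) := by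
    classical
  have elem_apply : ∀ (x y : ℓ₂) (B : Bil ℓ₂ ℓ₂), elemTensor ℓ₂ ℓ₂ x y B = B x y :=
    fun _ _ _ => rfl
  have he1 : ∀ n, ‖e n‖ = 1 := by
    intro n
    rw [he n]
    have := lp.norm_single (E := fun _ : ℕ => ℝ) (p := 2) (by norm_num)
      n (1:ℝ)
    simpa using this
  refine ⟨?_, ?_, ?_⟩
  · intro a
    set u : Dual ℝ (Bil ℓ₂ ℓ₂) := ∑ n ∈ a.support, a n • elemTensor ℓ₂ ℓ₂ (e n) (e n) with hu
    apply le_antisymm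
    · calc ‖u‖ ≤ ∑ n ∈ a.support, ‖a n • elemTensor ℓ₂ ℓ₂ (e n) (e n)‖ := norm_sum_le _ _
        _ ≤ ∑ n ∈ a.support, |a n| := by
            apply Finset.sum_le_sum
            intro n _
            rw [norm_smul, Real.norm_eq_abs]
            have h1 : ‖elemTensor ℓ₂ ℓ₂ (e n) (e n)‖ ≤ 1 := by
              apply ContinuousLinearMap.opNorm_le_bound _ zero_le_one
              intro B
              show ‖B (e n) (e n)‖ ≤ 1 * ‖B‖
              calc ‖B (e n) (e n)‖ ≤ ‖B (e n)‖ * ‖e n‖ := (B (e n)).le_opNorm _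
                _ ≤ ‖B‖ * ‖e n‖ * ‖e n‖ :=
                    mul_le_mul_of_nonneg_right (B.le_opNorm _) (norm_nonneg _)
                _ = 1 * ‖B‖ := by rw [he1]; ring
            nlinarith [abs_nonneg (a n)]
    · set ε : ℕ → ℝ := fun n => if 0 ≤ a n then 1 else -1 with hε
      have hεb : ∀ n, |ε n| ≤ 1 := by
        intro n; by_cases h : 0 ≤ a n <;> simp [hε, h]
      have hval : u (DiagAux.Bd ε hεb) = ∑ n ∈ a.support, |a n| := by
        rw [hu]
        change (∑ n ∈ a.support, a n • (show Bil ℓ₂ ℓ₂ →L[ℝ] ℝ from elemTensor ℓ₂ ℓ₂ (e n) (e n))) (DiagAux.Bd ε hεb) = _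
        rw [ContinuousLinearMap.sum_apply]
        apply Finset.sum_congr rfl
        intro n _
        rw [ContinuousLinearMap.smul_apply]
        change a n • DiagAux.Bd ε hεb (e n) (e n) = |a n|
        rw [he n, DiagAux.Bd_single, smul_eq_mul]
        by_cases h : 0 ≤ a n
        · rw [abs_of_nonneg h]; simp [hε, h]
        · rw [abs_of_neg (lt_of_not_ge h)]; simp [hε, h]
      calc ∑ n ∈ a.support, |a n| = u (DiagAux.Bd ε hεb) := hval.symm
        _ ≤ ‖u (DiagAux.Bd ε hεb)‖ := le_abs_self _
        _ ≤ ‖u‖ * ‖DiagAux.Bd ε hεb‖ := u.le_opNorm _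
        _ ≤ ‖u‖ * 1 := mul_le_mul_of_nonneg_left (DiagAux.Bd_norm ε hεb) (norm_nonneg _)
        _ = ‖u‖ := mul_one _
  · rintro ⟨φ, hφ, u, -, hconv⟩
    set ε : ℕ → ℝ := fun n => if ∃ j, φ (2 * j) = n then 1 else 0 with hε
    have hεb : ∀ n, |ε n| ≤ 1 := by
      intro n; by_cases h : ∃ j, φ (2 * j) = n <;> simp [hε, h]
    have hB := hconv (DiagAux.Bd ε hεb)
    have hk : ∀ k, elemTensor ℓ₂ ℓ₂ (e (φ k)) (e (φ k)) (DiagAux.Bd ε hεb) = ε (φ k) := by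
      intro k
      rw [elem_apply, he, DiagAux.Bd_single]
    have e1 : ∀ j : ℕ, ε (φ (2 * j)) = 1 := by
      intro j
      have : ∃ i, φ (2 * i) = φ (2 * j) := ⟨j, rfl⟩
      simp [hε, this]
    have e0 : ∀ j : ℕ, ε (φ (2 * j + 1)) = 0 := by
      intro j
      have : ¬ ∃ i, φ (2 * i) = φ (2 * j + 1) := by
        rintro ⟨i, hi⟩
        have := hφ.injective hi
        omega
      simp [hε, this]
    have t1 : Tendsto (fun j : ℕ => 2 * j) atTop atTop :=
      tendsto_atTop_atTop.2 fun b => ⟨b, fun a ha => by omega⟩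
    have t0 : Tendsto (fun j : ℕ => 2 * j + 1) atTop atTop :=
      tendsto_atTop_atTop.2 fun b => ⟨b, fun a ha => by omega⟩
    have h1 : Tendsto (fun j : ℕ => ε (φ (2 * j))) atTop (𝓝 (u (DiagAux.Bd ε hεb))) := by
      have := hB.comp t1
      simpa [Function.comp_def, hk] using this
    have h0 : Tendsto (fun j : ℕ => ε (φ (2 * j + 1))) atTop (𝓝 (u (DiagAux.Bd ε hεb))) := by
      have := hB.comp t0
      simpa [Function.comp_def, hk] using this
    have l1 : u (DiagAux.Bd ε hεb) = 1 := by
      refine tendsto_nhds_unique h1 ?_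
      simpa [e1] using (tendsto_const_nhds : Tendsto (fun _ : ℕ => (1:ℝ)) atTop (𝓝 1))
    have l0 : u (DiagAux.Bd ε hεb) = 0 := by
      refine tendsto_nhds_unique h0 ?_
      simpa [e0] using (tendsto_const_nhds : Tendsto (fun _ : ℕ => (0:ℝ)) atTop (𝓝 0))
    rw [l1] at l0
    exact one_ne_zero l0
  · intro f
    set y := (InnerProductSpace.toDual ℝ ℓ₂).symm f with hy
    have hf : ∀ n, f (e n) = y n := by
      intro n
      rw [he n, ← InnerProductSpace.toDual_symm_apply (𝕜 := ℝ), lp.inner_single_right]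
      simp [RCLike.inner_apply]
      rfl
    have hsum := (lp.memℓp y).summable (by norm_num : 0 < (2:ℝ≥0∞).toReal)
    have h0 : Tendsto (fun n => ‖y n‖ ^ (2:ℝ≥0∞).toReal) atTop (𝓝 0) :=
      hsum.tendsto_atTop_zero
    have h2 : ∀ n : ℕ, Real.sqrt (‖y n‖ ^ (2:ℝ≥0∞).toReal) = ‖y n‖ := by
      intro n
      rw [show (2:ℝ≥0∞).toReal = ((2:ℕ):ℝ) by norm_num, Real.rpow_natCast,
        Real.sqrt_sq (norm_nonneg _)]
    have h3 : Tendsto (fun n : ℕ => ‖y n‖) atTop (𝓝 0) := by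
      have h := (Real.continuous_sqrt.tendsto 0).comp h0
      rw [Real.sqrt_zero] at h
      exact h.congr h2
    have h4 : Tendsto (fun n : ℕ => y n) atTop (𝓝 0) :=
      tendsto_zero_iff_norm_tendsto_zero.2 h3
    simpa [hf] using h4
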